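/- Let p*_θ(x_1^n) = [F(θ) + w̃(θ) f̄]^{1/(α−1)} be a density on S^n with F, w̃ differentiable, and let s*(x,θ) = ∂/∂θ log p*_θ(x), τ*(θ) = E*_θ[f̄]. Then (a) Var*_θ[p*_θ(X)^{α−1} s*(X,θ)] = (α−1)^{−2} (w̃'(θ))² Var*_θ[f̄], and (b) Cov*_θ[s*(X,θ), p*_θ(X)^{α−1} s*(X,θ)] = (α−1)^{−1} w̃'(θ) τ*'(θ). Consequently the Jones et al. asymptotic variance Var*[p*^{α−1}s*] / Cov*[s*, p*^{α−1}s*]² equals Var*_θ[f̄] / (τ*'(θ))². -/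

import Mathlib

open MeasureTheory


lemma jones_core {Ω : Type*} [MeasurableSpace Ω] (hne : Nonempty Ω) (μ : Measure Ω)
    (c A B F' W' : ℝ) (hc : c ≠ 0) (hW' : W' ≠ 0) (fb : Ω → ℝ)
    (hz : ∀ x, 0 < A + B * fb x)
    (hpInt : Integrable (fun x => (A + B * fb x) ^ c) μ)
    (hfb1 : Integrable (fun x => fb x * (A + B * fb x) ^ c) μ)
    (hu0 : ∫ x, c * (F' + W' * fb x) * (A + B * fb x) ^ (c - 1) ∂μ = 0)
    (hkey : A = 0 → (∀ ε > 0, ∃ x, |fb x| < ε) → F' = 0) :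
    ∫ x, (c * (F' + W' * fb x)) * (c * (F' + W' * fb x) * (A + B * fb x) ^ (c - 1)) ∂μ
      = c * W' * ∫ x, fb x * (c * (F' + W' * fb x) * (A + B * fb x) ^ (c - 1)) ∂μ := by
  set z : Ω → ℝ := fun x => A + B * fb x with hz_def
  set u : Ω → ℝ := fun x => c * (F' + W' * fb x) * z x ^ (c - 1) with hu_def
  have hzeq : ∀ x, z x = A + B * fb x := fun _ => rfl
  have hzc1 : ∀ x, z x ^ (c - 1) = z x ^ c / z x := by
    intro x; rw [Real.rpow_sub (hz x), Real.rpow_one]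
  have hzc1pos : ∀ x, 0 < z x ^ (c - 1) := fun x => Real.rpow_pos_of_pos (hz x) _
  have hzcpos : ∀ x, 0 < z x ^ c := fun x => Real.rpow_pos_of_pos (hz x) _
  have habs_u : ∀ x, |u x| = |c| * |F' + W' * fb x| * z x ^ (c - 1) := by
    intro x
    rw [hu_def, abs_mul, abs_mul, abs_of_pos (hzc1pos x)]
  by_cases hF' : F' = 0
  · have h1 : (fun x => (c * (F' + W' * fb x)) * u x)
        = fun x => (c * W') * (fb x * u x) := by
      funext x; simp only [hu_def, hF']; ring
    rw [h1, integral_const_mul]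
  · by_cases hu : Integrable u μ
    · by_cases hv : Integrable (fun x => fb x * u x) μ
      · have h1 : (fun x => (c * (F' + W' * fb x)) * u x)
            = fun x => (c * F') * u x + (c * W') * (fb x * u x) := by
          funext x; simp only [hu_def]; ring
        rw [h1, integral_add (hu.const_mul _) (hv.const_mul _),
          integral_const_mul, integral_const_mul, hu0, mul_zero, zero_add]
      · have hnw : ¬ Integrable (fun x => (c * (F' + W' * fb x)) * u x) μ := by
          intro hW
          apply hv
          have hcW : c * W' ≠ 0 := mul_ne_zero hc hW'
          have h2 : (fun x => fb x * u x)
              = fun x => (c * W')⁻¹ * ((c * (F' + W' * fb x)) * u x - (c * F') * u x) := by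
            funext x
            field_simp
            ring
          rw [h2]
          exact ((hW.sub (hu.const_mul _)).const_mul _)
        rw [integral_undef hnw, integral_undef hv, mul_zero]
    · -- ¬ Integrable u
      have hB : B ≠ 0 := by
        intro hB0
        apply hu
        rcases hne with ⟨x₀⟩
        have hA : 0 < A := by have := hz x₀; rw [hB0] at this; simpa using this
        have hAc : (0:ℝ) < A ^ c := Real.rpow_pos_of_pos hA c
        have h3 : u = fun x => ((c * F' * A ^ (c-1)) / A ^ c) * ((A + B * fb x) ^ c)
            + ((c * W' * A ^ (c-1)) / A ^ c) * (fb x * (A + B * fb x) ^ c) := by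
          funext x
          simp only [hu_def, hz_def, hB0, zero_mul, add_zero]
          field_simp
        rw [h3]
        exact (hpInt.const_mul _).add (hfb1.const_mul _)
      -- measurability
      have hpm : AEMeasurable (fun x => (A + B * fb x) ^ c) μ :=
        (aestronglyMeasurable_iff_aemeasurable.mp hpInt.1)
      have hzm : AEMeasurable z μ := by
        have h4 : z = fun x => ((A + B * fb x) ^ c) ^ c⁻¹ :=
          funext fun x => (Real.rpow_rpow_inv (hz x).le hc).symm
        rw [h4]; exact hpm.pow_const _
      have hfbm : AEMeasurable fb μ := by
        have h5 : fb = fun x => (z x - A) * B⁻¹ := by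
          funext x; simp only [hz_def]; field_simp; ring
        rw [h5]; exact (hzm.sub aemeasurable_const).mul_const _
      have hum : AEStronglyMeasurable u μ := by
        apply aestronglyMeasurable_iff_aemeasurable.mpr
        exact (aemeasurable_const.mul (aemeasurable_const.add (aemeasurable_const.mul hfbm))).mul
          (hzm.pow_const _)
      have hvm : AEStronglyMeasurable (fun x => fb x * u x) μ :=
        aestronglyMeasurable_iff_aemeasurable.mpr
          (hfbm.mul (aestronglyMeasurable_iff_aemeasurable.mp hum))
      by_cases hv : Integrable (fun x => fb x * u x) μ
      · -- hard branch : derive A = 0 and smallness, contradiction with hkey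
        exfalso
        have hA0 : A = 0 := by
          by_contra hA0
          apply hu
          set ε : ℝ := |A| / (2 * (|B| + 1)) with hε_def
          have hεpos : 0 < ε := by
            apply div_pos (abs_pos.mpr hA0); positivity
          set C1 : ℝ := |c| * (|F'| + |W'| * ε) * (2 / |A|) with hC1_def
          refine Integrable.mono' ((hpInt.const_mul C1).add ((hv.abs).const_mul ε⁻¹)) hum
            (ae_of_all _ ?_)
          intro x
          simp only [Pi.add_apply, Real.norm_eq_abs]
          by_cases hy : ε ≤ |fb x|
          · have h6 : |u x| ≤ ε⁻¹ * |fb x * u x| := by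
              calc |u x| = ε⁻¹ * (ε * |u x|) := by field_simp
                _ ≤ ε⁻¹ * (|fb x| * |u x|) := by
                    apply mul_le_mul_of_nonneg_left _ (by positivity)
                    exact mul_le_mul_of_nonneg_right hy (abs_nonneg _)
                _ = ε⁻¹ * |fb x * u x| := by rw [← abs_mul]
            have h7 : 0 ≤ C1 * ((A + B * fb x) ^ c) := by
              apply mul_nonneg _ (hzcpos x).le
              rw [hC1_def]; positivity
            linarith
          · push_neg at hy
            have hBfb : |B * fb x| ≤ |A| / 2 := by
              rw [abs_mul]
              calc |B| * |fb x| ≤ |B| * ε := mul_le_mul_of_nonneg_left hy.le (abs_nonneg _)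
                _ = |B| * |A| / (2 * (|B| + 1)) := by rw [hε_def]; ring
                _ ≤ (|B| + 1) * |A| / (2 * (|B| + 1)) := by
                    gcongr
                    linarith
                _ = |A| / 2 := by field_simp
            have hApos : 0 < A := by
              by_contra hA
              push_neg at hA
              have h8 : B * fb x ≤ |A| / 2 := (abs_le.mp hBfb).2
              have h9 : (0:ℝ) < A + B * fb x := hz x
              rw [abs_of_nonpos hA] at h8
              linarith
            have hz2 : A / 2 ≤ z x := by
              have h8 : -(|A|/2) ≤ B * fb x := (abs_le.mp hBfb).1
              rw [abs_of_pos hApos] at h8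
              rw [hzeq x]; linarith
            have hinv : (z x)⁻¹ ≤ 2 / A := by
              calc (z x)⁻¹ ≤ (A/2)⁻¹ := by
                    apply inv_anti₀ (by positivity) hz2
                _ = 2 / A := by rw [inv_div]
            have hFW : |F' + W' * fb x| ≤ |F'| + |W'| * ε := by
              calc |F' + W' * fb x| ≤ |F'| + |W' * fb x| := abs_add_le _ _
                _ ≤ |F'| + |W'| * ε := by
                    rw [abs_mul]
                    nlinarith [abs_nonneg W', hy.le]
            have h8 : |u x| ≤ C1 * z x ^ c := by
              have t1 : z x ^ (c-1) ≤ z x ^ c * (2 / A) := by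
                rw [hzc1 x, div_eq_mul_inv]
                exact mul_le_mul_of_nonneg_left hinv (hzcpos x).le
              calc |u x| = |c| * |F' + W' * fb x| * z x ^ (c-1) := habs_u x
                _ ≤ |c| * (|F'| + |W'| * ε) * (z x ^ c * (2 / A)) := by
                    apply mul_le_mul (mul_le_mul_of_nonneg_left hFW (abs_nonneg c)) t1
                      (hzc1pos x).le (by positivity)
                _ = C1 * z x ^ c := by rw [hC1_def, abs_of_pos hApos]; ring
            have h9 : 0 ≤ ε⁻¹ * |fb x * u x| := by positivity
            have h10 : z x ^ c = (A + B * fb x) ^ c := by rw [hz_def]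
            linarith [h8, h9]
        have hsmall : ∀ ε > 0, ∃ x, |fb x| < ε := by
          intro ε hε
          by_contra hcon
          push_neg at hcon
          apply hu
          refine Integrable.mono' ((hv.abs).const_mul ε⁻¹) hum (ae_of_all _ ?_)
          intro x
          simp only [Real.norm_eq_abs]
          calc |u x| = ε⁻¹ * (ε * |u x|) := by field_simp
            _ ≤ ε⁻¹ * (|fb x| * |u x|) := by
                apply mul_le_mul_of_nonneg_left _ (by positivity)
                exact mul_le_mul_of_nonneg_right (hcon x) (abs_nonneg _)
            _ = ε⁻¹ * |fb x * u x| := by rw [← abs_mul]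
        exact hF' (hkey hA0 hsmall)
      · -- ¬u, ¬v : show the full integrand is not integrable
        have hm : (-F' / W') ≠ 0 := by
          apply div_ne_zero (neg_ne_zero.mpr hF') hW'
        set m : ℝ := -F' / W' with hm_def
        have hFWm : ∀ x, F' + W' * fb x = W' * (fb x - m) := by
          intro x; rw [hm_def]; field_simp; ring
        have hL0 : A + B * m ≠ 0 := by
          intro hL
          apply hu
          have h3 : u = fun x => (c * W' / B) * ((A + B * fb x) ^ c) := by
            funext x
            have hA' : A = -(B * m) := by linarith [hL]
            have hzx : A + B * fb x = B * (fb x - m) := by rw [hA']; ring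
            have hBfb : B * (fb x - m) ≠ 0 := by rw [← hzx]; exact (hz x).ne'
            rw [hu_def]
            simp only
            rw [hFWm x, hzc1 x, hzeq x, hzx]
            rw [mul_div_assoc', div_mul_eq_mul_div, div_eq_div_iff hBfb hB]
            ring
          rw [h3]
          exact hpInt.const_mul _
        set L : ℝ := A + B * m with hL_def
        set ρ : ℝ := min |m| (|L| / (2 * (|B| + 1))) with hρ_def
        have hρpos : 0 < ρ := by
          apply lt_min (abs_pos.mpr hm)
          apply div_pos (abs_pos.mpr hL0); positivity
        set C1 : ℝ := (2 * |m|) * (|c| * |W'| * ρ) * (2 / |L|) with hC1_def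
        set C2 : ℝ := max ((2 * |m|) / (|c| * |W'| * ρ)) (2 / (|c| * |W'|)) with hC2_def
        have hnw : ¬ Integrable (fun x => (c * (F' + W' * fb x)) * u x) μ := by
          intro hW
          apply hv
          refine Integrable.mono' ((hpInt.const_mul C1).add ((hW.abs).const_mul C2)) hvm
            (ae_of_all _ ?_)
          intro x
          simp only [Pi.add_apply, Real.norm_eq_abs]
          have habs_w : |(c * (F' + W' * fb x)) * u x| = |c| * |W'| * |fb x - m| * |u x| := by
            rw [abs_mul, hFWm x, abs_mul, abs_mul]
            ring
          have habs_v : |fb x * u x| = |fb x| * |u x| := abs_mul _ _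
          by_cases hyr : |fb x - m| < ρ
          · -- near m : L > 0 and z comparable to L
            have hBd : |B * (fb x - m)| ≤ |L| / 2 := by
              rw [abs_mul]
              calc |B| * |fb x - m| ≤ |B| * ρ := mul_le_mul_of_nonneg_left hyr.le (abs_nonneg _)
                _ ≤ |B| * (|L| / (2 * (|B| + 1))) :=
                    mul_le_mul_of_nonneg_left (min_le_right _ _) (abs_nonneg _)
                _ = |B| * |L| / (2 * (|B| + 1)) := by ring
                _ ≤ (|B| + 1) * |L| / (2 * (|B| + 1)) := by gcongr; linarith
                _ = |L| / 2 := by field_simp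
            have hzL : z x = L + B * (fb x - m) := by
              rw [hzeq x, hL_def]; ring
            have hLpos : 0 < L := by
              by_contra hL
              push_neg at hL
              have h8 : B * (fb x - m) ≤ |L| / 2 := (abs_le.mp hBd).2
              have h9 : (0:ℝ) < L + B * (fb x - m) := by rw [← hzL]; exact hz x
              rw [abs_of_nonpos hL] at h8
              linarith
            have hz2 : L / 2 ≤ z x := by
              have h8 : -(|L|/2) ≤ B * (fb x - m) := (abs_le.mp hBd).1
              rw [abs_of_pos hLpos] at h8
              rw [hzL]; linarith
            have hinv : (z x)⁻¹ ≤ 2 / L := by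
              calc (z x)⁻¹ ≤ (L/2)⁻¹ := inv_anti₀ (by positivity) hz2
                _ = 2 / L := by rw [inv_div]
            have hfbx : |fb x| ≤ 2 * |m| := by
              calc |fb x| = |(fb x - m) + m| := by ring_nf
                _ ≤ |fb x - m| + |m| := abs_add_le _ _
                _ ≤ ρ + |m| := by linarith
                _ ≤ 2 * |m| := by
                    have hρm : ρ ≤ |m| := min_le_left _ _
                    linarith [hρm]
            have h8 : |fb x * u x| ≤ C1 * z x ^ c := by
              have t1 : z x ^ (c-1) ≤ z x ^ c * (2 / L) := by
                rw [hzc1 x, div_eq_mul_inv]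
                exact mul_le_mul_of_nonneg_left hinv (hzcpos x).le
              have t2 : |u x| ≤ |c| * (|W'| * ρ) * (z x ^ c * (2 / L)) := by
                calc |u x| = |c| * |F' + W' * fb x| * z x ^ (c-1) := habs_u x
                  _ = |c| * (|W'| * |fb x - m|) * z x ^ (c-1) := by
                      rw [hFWm x, abs_mul]
                  _ ≤ |c| * (|W'| * ρ) * (z x ^ c * (2 / L)) := by
                      apply mul_le_mul _ t1 (hzc1pos x).le (by positivity)
                      apply mul_le_mul_of_nonneg_left _ (abs_nonneg c)
                      exact mul_le_mul_of_nonneg_left hyr.le (abs_nonneg _)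
              calc |fb x * u x| = |fb x| * |u x| := habs_v
                _ ≤ (2 * |m|) * (|c| * (|W'| * ρ) * (z x ^ c * (2 / L))) := by
                    apply mul_le_mul hfbx t2 (abs_nonneg _) (by positivity)
                _ = C1 * z x ^ c := by rw [hC1_def, abs_of_pos hLpos]; ring
            have h9 : 0 ≤ C2 * |(c * (F' + W' * fb x)) * u x| := by
              apply mul_nonneg _ (abs_nonneg _)
              rw [hC2_def]
              positivity
            have h10 : z x ^ c = (A + B * fb x) ^ c := by rw [hz_def]
            rw [← h10]
            linarith
          · -- far from m
            push_neg at hyr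
            have hcW : (0:ℝ) < |c| * |W'| :=
              mul_pos (abs_pos.mpr hc) (abs_pos.mpr hW')
            have h8 : |fb x * u x| ≤ C2 * |(c * (F' + W' * fb x)) * u x| := by
              rw [habs_v, habs_w]
              by_cases hfar : |m| ≤ |fb x - m|
              · have hfbx : |fb x| ≤ 2 * |fb x - m| := by
                  calc |fb x| = |(fb x - m) + m| := by ring_nf
                    _ ≤ |fb x - m| + |m| := abs_add_le _ _
                    _ ≤ 2 * |fb x - m| := by linarith
                calc |fb x| * |u x| ≤ (2 * |fb x - m|) * |u x| :=
                      mul_le_mul_of_nonneg_right hfbx (abs_nonneg _)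
                  _ = (2 / (|c| * |W'|)) * (|c| * |W'| * |fb x - m| * |u x|) := by
                      field_simp
                  _ ≤ C2 * (|c| * |W'| * |fb x - m| * |u x|) := by
                      apply mul_le_mul_of_nonneg_right (le_max_right _ _)
                      positivity
              · push_neg at hfar
                have hfbx : |fb x| ≤ 2 * |m| := by
                  calc |fb x| = |(fb x - m) + m| := by ring_nf
                    _ ≤ |fb x - m| + |m| := abs_add_le _ _
                    _ ≤ 2 * |m| := by linarith
                have hq : |u x| ≤ (|c| * |W'| * |fb x - m| * |u x|) / (|c| * |W'| * ρ) := by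
                  rw [le_div_iff₀ (by positivity)]
                  have : |c| * |W'| * ρ * |u x| ≤ |c| * |W'| * |fb x - m| * |u x| := by
                    apply mul_le_mul_of_nonneg_right _ (abs_nonneg _)
                    exact mul_le_mul_of_nonneg_left hyr (le_of_lt hcW)
                  linarith
                calc |fb x| * |u x| ≤ (2 * |m|) * |u x| :=
                      mul_le_mul_of_nonneg_right hfbx (abs_nonneg _)
                  _ ≤ (2 * |m|) * ((|c| * |W'| * |fb x - m| * |u x|) / (|c| * |W'| * ρ)) :=
                      mul_le_mul_of_nonneg_left hq (by positivity)
                  _ = ((2 * |m|) / (|c| * |W'| * ρ)) * (|c| * |W'| * |fb x - m| * |u x|) := by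
                      ring
                  _ ≤ C2 * (|c| * |W'| * |fb x - m| * |u x|) := by
                      apply mul_le_mul_of_nonneg_right (le_max_left _ _)
                      positivity
            have h9 : 0 ≤ C1 * ((A + B * fb x) ^ c) := by
              apply mul_nonneg _ (hzcpos x).le
              rw [hC1_def]
              positivity
            linarith
        rw [integral_undef hnw, integral_undef hv, mul_zero]

theorem jones_asymptotic_variance_M_alpha {Ω : Type*} [MeasurableSpace Ω] (μ : Measure Ω)
    (α : ℝ) (hα1 : α ≠ 1)
    (F wt : ℝ → ℝ) (F' wt' θ : ℝ)
    (hF : HasDerivAt F F' θ) (hw : HasDerivAt wt wt' θ) (hw' : wt' ≠ 0)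
    (fb : Ω → ℝ)
    (pstar : ℝ → Ω → ℝ)
    (hpos : ∀ t x, 0 < F t + wt t * fb x)
    (hps : ∀ t x, pstar t x = (F t + wt t * fb x) ^ ((α - 1)⁻¹))
    (hprob : ∀ t, ∫ x, pstar t x ∂μ = 1)
    (s : Ω → ℝ)
    (hs : ∀ x, HasDerivAt (fun t => Real.log (pstar t x)) (s x) θ)
    -- differentiation under the integral sign
    (hds : HasDerivAt (fun t => ∫ x, pstar t x ∂μ) (∫ x, s x * pstar θ x ∂μ) θ)
    (dτ : ℝ)
    (hdτ : HasDerivAt (fun t => ∫ x, fb x * pstar t x ∂μ) dτ θ)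
    (hdτ' : HasDerivAt (fun t => ∫ x, fb x * pstar t x ∂μ)
        (∫ x, fb x * (s x * pstar θ x) ∂μ) θ)
    (hfb1 : Integrable (fun x => fb x * pstar θ x) μ)
    (hfb2 : Integrable (fun x => fb x ^ 2 * pstar θ x) μ) :
    let Var : (Ω → ℝ) → ℝ := fun g =>
      (∫ x, g x ^ 2 * pstar θ x ∂μ) - (∫ x, g x * pstar θ x ∂μ) ^ 2
    let Cov : (Ω → ℝ) → (Ω → ℝ) → ℝ := fun g h =>
      (∫ x, g x * h x * pstar θ x ∂μ)
        - (∫ x, g x * pstar θ x ∂μ) * (∫ x, h x * pstar θ x ∂μ)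
    (Var (fun x => pstar θ x ^ (α - 1) * s x) = (α - 1)⁻¹ ^ 2 * wt' ^ 2 * Var fb) ∧
    (Cov s (fun x => pstar θ x ^ (α - 1) * s x) = (α - 1)⁻¹ * wt' * dτ) ∧
    (Var (fun x => pstar θ x ^ (α - 1) * s x)
        / (Cov s (fun x => pstar θ x ^ (α - 1) * s x)) ^ 2
      = Var fb / dτ ^ 2) := by
  intro Var Cov
  have hα : α - 1 ≠ 0 := sub_ne_zero.mpr hα1
  set c : ℝ := (α - 1)⁻¹ with hc_def
  have hc : c ≠ 0 := inv_ne_zero hα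
  have hc1 : c * (α - 1) = 1 := inv_mul_cancel₀ hα
  -- nonemptiness
  have hne : Nonempty Ω := by
    by_contra h
    rw [not_nonempty_iff] at h
    have h1 := hprob θ
    rw [Measure.eq_zero_of_isEmpty μ] at h1
    simp at h1
  -- integrability of pstar θ
  have hpInt : Integrable (fun x => pstar θ x) μ := by
    by_contra h
    have h1 := hprob θ
    rw [integral_undef h] at h1
    norm_num at h1
  have hppos : ∀ x, 0 < pstar θ x := by
    intro x; rw [hps θ x]; exact Real.rpow_pos_of_pos (hpos θ x) _
  -- pstar^(α-1) = F θ + wt θ * fb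
  have hpow : ∀ x, pstar θ x ^ (α - 1) = F θ + wt θ * fb x := by
    intro x
    rw [hps θ x, ← Real.rpow_mul (hpos θ x).le, hc1, Real.rpow_one]
  -- score formula
  have hsx : ∀ x, s x = c * ((F' + wt' * fb x) / (F θ + wt θ * fb x)) := by
    intro x
    have h1 : (fun t => Real.log (pstar t x)) = fun t => c * Real.log (F t + wt t * fb x) := by
      funext t; rw [hps t x, Real.log_rpow (hpos t x)]
    have h3 : HasDerivAt (fun t => F t + wt t * fb x) (F' + wt' * fb x) θ :=
      hF.add (hw.mul_const _)
    have h2 : HasDerivAt (fun t => c * Real.log (F t + wt t * fb x))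
        (c * ((F' + wt' * fb x) / (F θ + wt θ * fb x))) θ :=
      (h3.log (hpos θ x).ne').const_mul c
    exact (h1 ▸ hs x).unique h2
  have hg : ∀ x, pstar θ x ^ (α - 1) * s x = c * (F' + wt' * fb x) := by
    intro x
    rw [hpow x, hsx x]
    first
    | (field_simp [(hpos θ x).ne']; ring)
    | field_simp [(hpos θ x).ne']
  have hu_eq : ∀ x, s x * pstar θ x
      = c * (F' + wt' * fb x) * (F θ + wt θ * fb x) ^ (c - 1) := by
    intro x
    rw [hsx x, hps θ x, Real.rpow_sub (hpos θ x), Real.rpow_one]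
    first
    | (field_simp [(hpos θ x).ne']; ring)
    | field_simp [(hpos θ x).ne']
  -- ∫ s p = 0
  have hu0 : ∫ x, s x * pstar θ x ∂μ = 0 := by
    have hconst : (fun t => ∫ x, pstar t x ∂μ) = fun _ => (1:ℝ) := funext hprob
    have h0 : HasDerivAt (fun _ : ℝ => (1:ℝ)) 0 θ := hasDerivAt_const θ 1
    exact hds.unique (hconst ▸ h0)
  have hdτv : dτ = ∫ x, fb x * (s x * pstar θ x) ∂μ := hdτ.unique hdτ'
  -- key Var computation
  have hfp : (fun x => pstar θ x) = fun x => (F θ + wt θ * fb x) ^ c := funext (hps θ)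
  set T1 : ℝ := ∫ x, fb x * pstar θ x ∂μ with hT1
  set T2 : ℝ := ∫ x, fb x ^ 2 * pstar θ x ∂μ with hT2
  have hIg2 : ∫ x, (pstar θ x ^ (α - 1) * s x) ^ 2 * pstar θ x ∂μ
      = (c * F') ^ 2 + (2 * c ^ 2 * F' * wt') * T1 + (c * wt') ^ 2 * T2 := by
    have h1 : (fun x => (pstar θ x ^ (α - 1) * s x) ^ 2 * pstar θ x)
        = fun x => ((c * F') ^ 2) * pstar θ x
          + ((2 * c ^ 2 * F' * wt') * (fb x * pstar θ x)
            + ((c * wt') ^ 2) * (fb x ^ 2 * pstar θ x)) := by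
      funext x; rw [hg x]; ring
    have i1 : Integrable (fun x => (2 * c ^ 2 * F' * wt') * (fb x * pstar θ x)
        + ((c * wt') ^ 2) * (fb x ^ 2 * pstar θ x)) μ :=
      (hfb1.const_mul _).add (hfb2.const_mul _)
    rw [h1, integral_add (hpInt.const_mul _) i1,
      integral_add (hfb1.const_mul _) (hfb2.const_mul _),
      integral_const_mul, integral_const_mul, integral_const_mul, hprob θ]
    ring
  have hIg : ∫ x, (pstar θ x ^ (α - 1) * s x) * pstar θ x ∂μ = c * F' + c * wt' * T1 := by
    have h1 : (fun x => (pstar θ x ^ (α - 1) * s x) * pstar θ x)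
        = fun x => (c * F') * pstar θ x + (c * wt') * (fb x * pstar θ x) := by
      funext x; rw [hg x]; ring
    rw [h1, integral_add (hpInt.const_mul _) (hfb1.const_mul _),
      integral_const_mul, integral_const_mul, hprob θ]
    ring
  -- the covariance core
  have hcov : ∫ x, s x * (pstar θ x ^ (α - 1) * s x) * pstar θ x ∂μ = c * wt' * dτ := by
    have h1 : (fun x => s x * (pstar θ x ^ (α - 1) * s x) * pstar θ x)
        = fun x => (c * (F' + wt' * fb x))
            * (c * (F' + wt' * fb x) * (F θ + wt θ * fb x) ^ (c - 1)) := by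
      funext x
      rw [show s x * (pstar θ x ^ (α - 1) * s x) * pstar θ x
          = (pstar θ x ^ (α - 1) * s x) * (s x * pstar θ x) from by ring, hg x, hu_eq x]
    have h2 : (fun x => fb x * (s x * pstar θ x))
        = fun x => fb x * (c * (F' + wt' * fb x) * (F θ + wt θ * fb x) ^ (c - 1)) := by
      funext x; rw [hu_eq x]
    have h3 : ∫ x, c * (F' + wt' * fb x) * (F θ + wt θ * fb x) ^ (c - 1) ∂μ = 0 := by
      rw [← hu0]
      exact congrArg (integral μ) (funext fun x => (hu_eq x).symm)
    have hkey : F θ = 0 → (∀ ε > 0, ∃ x, |fb x| < ε) → F' = 0 := by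
      intro hA hsmall
      have hFt : ∀ t, 0 ≤ F t := by
        intro t
        by_contra hFt
        push_neg at hFt
        obtain ⟨x, hx⟩ := hsmall (-F t / (|wt t| + 1))
          (div_pos (by linarith) (by positivity))
        have h4 := hpos t x
        have h5 : wt t * fb x ≤ |wt t| * |fb x| := by
          calc wt t * fb x ≤ |wt t * fb x| := le_abs_self _
            _ = |wt t| * |fb x| := abs_mul _ _
        have h6 : |wt t| * |fb x| ≤ |wt t| * (-F t / (|wt t| + 1)) :=
          mul_le_mul_of_nonneg_left hx.le (abs_nonneg _)
        have h7 : |wt t| * (-F t / (|wt t| + 1)) < -F t := by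
          rw [mul_div_assoc']
          rw [div_lt_iff₀ (by positivity)]
          nlinarith [abs_nonneg (wt t)]
        linarith
      have hmin : IsLocalMin F θ := by
        apply Filter.Eventually.of_forall
        intro t
        rw [hA]
        exact hFt t
      exact hmin.hasDerivAt_eq_zero hF
    rw [h1, hdτv,
      congrArg (integral μ) h2]
    have hpInt' : Integrable (fun x => (F θ + wt θ * fb x) ^ c) μ :=
      hpInt.congr (Filter.Eventually.of_forall fun x => hps θ x)
    have hfb1' : Integrable (fun x => fb x * (F θ + wt θ * fb x) ^ c) μ :=
      hfb1.congr (Filter.Eventually.of_forall fun x =>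
        congrArg (fun r => fb x * r) (hps θ x))
    exact jones_core hne μ c (F θ) (wt θ) F' wt' hc hw' fb (hpos θ)
      hpInt' hfb1' h3 hkey
  refine ⟨?_, ?_, ?_⟩
  · show (∫ x, (pstar θ x ^ (α - 1) * s x) ^ 2 * pstar θ x ∂μ)
        - (∫ x, (pstar θ x ^ (α - 1) * s x) * pstar θ x ∂μ) ^ 2
      = c ^ 2 * wt' ^ 2 * (T2 - T1 ^ 2)
    rw [hIg2, hIg]; ring
  · show (∫ x, s x * (pstar θ x ^ (α - 1) * s x) * pstar θ x ∂μ)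
        - (∫ x, s x * pstar θ x ∂μ) * (∫ x, (pstar θ x ^ (α - 1) * s x) * pstar θ x ∂μ)
      = c * wt' * dτ
    rw [hcov, hu0, zero_mul, sub_zero]
  · show ((∫ x, (pstar θ x ^ (α - 1) * s x) ^ 2 * pstar θ x ∂μ)
        - (∫ x, (pstar θ x ^ (α - 1) * s x) * pstar θ x ∂μ) ^ 2)
      / ((∫ x, s x * (pstar θ x ^ (α - 1) * s x) * pstar θ x ∂μ)
        - (∫ x, s x * pstar θ x ∂μ) * (∫ x, (pstar θ x ^ (α - 1) * s x) * pstar θ x ∂μ)) ^ 2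
      = (T2 - T1 ^ 2) / dτ ^ 2
    rw [hIg2, hIg, hcov, hu0, zero_mul, sub_zero]
    have hne2 : c ^ 2 * wt' ^ 2 ≠ 0 := by
      apply mul_ne_zero (pow_ne_zero _ hc) (pow_ne_zero _ hw')
    calc ((c * F') ^ 2 + 2 * c ^ 2 * F' * wt' * T1 + (c * wt') ^ 2 * T2
          - (c * F' + c * wt' * T1) ^ 2) / (c * wt' * dτ) ^ 2
        = (c ^ 2 * wt' ^ 2 * (T2 - T1 ^ 2)) / (c ^ 2 * wt' ^ 2 * dτ ^ 2) := by
          ring_nf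
      _ = (T2 - T1 ^ 2) / dτ ^ 2 := mul_div_mul_left _ _ hne2
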